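/- Let (x₁,...,xₘ) be a sequence of linearly independent vectors in Lⁿ (L = ℝ or ℂ) satisfying dist(xⱼ, span(x₁,...,x_{j−1})) ≥ 1 − 1/2^{j−1} for 2 ≤ j ≤ m. Then e^{−2} ‖x₁‖⋯‖xₘ‖ ≤ ‖x₁ ∧ ⋯ ∧ xₘ‖ ≤ ‖x₁‖⋯‖xₘ‖. -/

import Mathlib

/-- The Gram determinant `det (⟪x i, y j⟫)` of two `m`-tuples of vectors.
For pure wedge products `X = x₁ ∧ ⋯ ∧ xₘ` and `Y = y₁ ∧ ⋯ ∧ yₘ` this is the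
inner product `⟪X, Y⟫` in `⋀ᵐ U`, for the inner product on `⋀ᵐ U` making
wedge products of orthonormal vectors orthonormal. -/
noncomputable def gramDet (𝕜 : Type*) [RCLike 𝕜] {E : Type*} [NormedAddCommGroup E]
    [InnerProductSpace 𝕜 E] {m : ℕ} (x y : Fin m → E) : 𝕜 :=
  Matrix.det (Matrix.of fun i j => (inner 𝕜 (x i) (y j) : 𝕜))

/-- The norm `‖x₁ ∧ ⋯ ∧ xₘ‖` of a pure wedge product, computed as the square
root of the Gram determinant. -/
noncomputable def wedgeNorm (𝕜 : Type*) [RCLike 𝕜] {E : Type*} [NormedAddCommGroup E]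
    [InnerProductSpace 𝕜 E] {m : ℕ} (x : Fin m → E) : ℝ :=
  Real.sqrt (RCLike.re (gramDet 𝕜 x x))

/-- The projective distance `dist(x,y) = ‖x ∧ y‖ / (‖x‖ ‖y‖)` between two
nonzero vectors. -/
noncomputable def pdist (𝕜 : Type*) [RCLike 𝕜] {E : Type*} [NormedAddCommGroup E]
    [InnerProductSpace 𝕜 E] (x y : E) : ℝ :=
  wedgeNorm 𝕜 ![x, y] / (‖x‖ * ‖y‖)

/-- The projective distance between the lines spanned by the pure wedge products
`x₁ ∧ ⋯ ∧ xₘ` and `y₁ ∧ ⋯ ∧ yₘ` in `⋀ᵐ U`: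
`dist(X,Y) = ‖X ∧ Y‖/(‖X‖‖Y‖) = √(‖X‖²‖Y‖² − |⟪X,Y⟫|²)/(‖X‖‖Y‖)`.
When `x`, `y` are bases of `m`-dimensional subspaces `V₁`, `V₂`, this is the
projective distance `dist(V₁,V₂)` (it does not depend on the chosen bases). -/
noncomputable def pdistT (𝕜 : Type*) [RCLike 𝕜] {E : Type*} [NormedAddCommGroup E]
    [InnerProductSpace 𝕜 E] {m : ℕ} (x y : Fin m → E) : ℝ :=
  Real.sqrt (RCLike.re (gramDet 𝕜 x x) * RCLike.re (gramDet 𝕜 y y)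
      - ‖gramDet 𝕜 x y‖ ^ 2) / (wedgeNorm 𝕜 x * wedgeNorm 𝕜 y)

/-- The distance `dist(x, V)` from a nonzero point to a subspace: the infimum
(in fact minimum) of `dist(x,y)` over nonzero `y ∈ V`. -/
noncomputable def pdistPV (𝕜 : Type*) [RCLike 𝕜] {E : Type*} [NormedAddCommGroup E]
    [InnerProductSpace 𝕜 E] (x : E) (V : Submodule 𝕜 E) : ℝ :=
  sInf {d : ℝ | ∃ y ∈ V, y ≠ 0 ∧ d = pdist 𝕜 x y}

/-- The span of the vectors `x i` with `i < j`. -/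
noncomputable def earlierSpan {𝕜 : Type*} [RCLike 𝕜] {E : Type*} [NormedAddCommGroup E]
    [InnerProductSpace 𝕜 E] {m : ℕ} (x : Fin m → E) (j : Fin m) : Submodule 𝕜 E :=
  Submodule.span 𝕜 {v : E | ∃ i : Fin m, i < j ∧ v = x i}

/-- A sequence `(x₁,…,xₘ)` is almost orthogonal if it is linearly independent
and `dist(xⱼ, ⟨x₁,…,x_{j−1}⟩) ≥ 1 − 1/2^{j−1}` for `2 ≤ j ≤ m`.
(Here the index `j : Fin m` is `0`-based, so the condition reads
`1 − (1/2)^j ≤ dist(x j, span (x i, i < j))` for `j ≥ 1`.) -/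
def AlmostOrthogonal (𝕜 : Type*) [RCLike 𝕜] {E : Type*} [NormedAddCommGroup E]
    [InnerProductSpace 𝕜 E] {m : ℕ} (x : Fin m → E) : Prop :=
  LinearIndependent 𝕜 x ∧
    ∀ j : Fin m, 0 < (j : ℕ) →
      1 - (1 / 2 : ℝ) ^ (j : ℕ) ≤ pdistPV 𝕜 (x j) (earlierSpan x j)

/-! ### Auxiliary material -/

open Finset
open InnerProductSpace

instance finWFLT (m : ℕ) : WellFoundedLT (Fin m) := inferInstance

section Exp

theorem exp_neg_two_mul_le {t : ℝ} (h0 : 0 ≤ t) (h2 : t ≤ 1/2) :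
    Real.exp (-(2*t)) ≤ 1 - t := by
  have he := Real.add_one_le_exp (2*t)
  have hexp : (0:ℝ) < Real.exp (2*t) := Real.exp_pos _
  rw [Real.exp_neg]
  calc (Real.exp (2*t))⁻¹ = 1 / Real.exp (2*t) := by rw [one_div]
    _ ≤ 1 - t := by rw [div_le_iff₀ hexp]; nlinarith [he]

theorem prod_one_sub_ge (k : ℕ) :
    Real.exp (-(2 * (1 - (1/2:ℝ)^k))) ≤ ∏ i ∈ Finset.range k, (1 - (1/2:ℝ)^(i+1)) := by
  induction k with
  | zero => simp
  | succ k ih =>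
    rw [Finset.prod_range_succ]
    have h1 : Real.exp (-(2*(1-(1/2:ℝ)^(k+1)))) =
        Real.exp (-(2*(1-(1/2:ℝ)^k))) * Real.exp (-(2*(1/2:ℝ)^(k+1))) := by
      rw [← Real.exp_add]; congr 1; rw [pow_succ]; ring
    have hb : (0:ℝ) ≤ (1/2:ℝ)^(k+1) := by positivity
    have hb2 : ((1:ℝ)/2)^(k+1) ≤ 1/2 := by
      calc ((1:ℝ)/2)^(k+1) ≤ ((1:ℝ)/2)^1 :=
        pow_le_pow_of_le_one (by norm_num) (by norm_num) (by omega)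
      _ = 1/2 := pow_one _
    have hp : (0:ℝ) ≤ ∏ i ∈ Finset.range k, (1 - (1/2:ℝ)^(i+1)) := by
      refine Finset.prod_nonneg fun i _ => ?_
      have : ((1:ℝ)/2)^(i+1) ≤ 1 := pow_le_one₀ (by norm_num) (by norm_num)
      linarith
    rw [h1]
    exact mul_le_mul ih (exp_neg_two_mul_le hb hb2) (Real.exp_pos _).le hp

theorem exp_neg_two_le_prod (k : ℕ) :
    Real.exp (-2) ≤ ∏ i ∈ Finset.range k, (1 - (1/2:ℝ)^(i+1)) := by
  refine le_trans (Real.exp_le_exp.mpr ?_) (prod_one_sub_ge k)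
  have : (0:ℝ) < (1/2:ℝ)^k := by positivity
  linarith

/-- Lower-bound coefficients. -/
noncomputable def aoc (j : ℕ) : ℝ := if j = 0 then 1 else 1 - (1/2)^j

theorem aoc_nonneg (j : ℕ) : 0 ≤ aoc j := by
  rw [aoc]; split
  · norm_num
  · have : ((1:ℝ)/2)^j ≤ 1 := pow_le_one₀ (by norm_num) (by norm_num)
    linarith

theorem aoc_le_one (j : ℕ) : aoc j ≤ 1 := by
  rw [aoc]; split
  · norm_num
  · have : (0:ℝ) ≤ ((1:ℝ)/2)^j := by positivity
    linarith

theorem exp_neg_two_le_prod_aoc (m : ℕ) :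
    Real.exp (-2) ≤ ∏ i : Fin m, aoc (i : ℕ) := by
  rw [Fin.prod_univ_eq_prod_range (fun i => aoc i) m]
  cases m with
  | zero =>
    simpa using Real.exp_le_exp.mpr (show (-2:ℝ) ≤ 0 by norm_num) |>.trans_eq Real.exp_zero
  | succ k =>
    rw [Finset.prod_range_succ']
    have h0 : aoc 0 = 1 := by simp [aoc]
    rw [h0, mul_one]
    have : ∀ i, aoc (i+1) = 1 - (1/2:ℝ)^(i+1) := fun i => by simp [aoc]
    simp_rw [this]
    exact exp_neg_two_le_prod k

end Exp

section Gram
variable {𝕜 : Type*} [RCLike 𝕜] {E : Type*} [NormedAddCommGroup E] [InnerProductSpace 𝕜 E] {m : ℕ}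

theorem gramDet_eq_prod (x : Fin m → E) :
    gramDet 𝕜 x x = ∏ i, ((‖gramSchmidt 𝕜 x i‖ : 𝕜) ^ 2) := by
  classical
  set g := gramSchmidt 𝕜 x with hg
  set A : Matrix (Fin m) (Fin m) 𝕜 :=
    Matrix.of (fun n i => if i = n then 1 else if i < n then
      (inner 𝕜 (g i) (x n) : 𝕜) / (‖g i‖ : 𝕜) ^ 2 else 0) with hA
  have hA0 : ∀ nn i : Fin m, ¬ i ≤ nn → A nn i = 0 := by
    intro nn i hi
    simp only [hA, Matrix.of_apply]
    rw [if_neg (by rintro rfl; exact hi le_rfl), if_neg (fun hc => hi hc.le)]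
  have hAd : ∀ nn : Fin m, A nn nn = 1 := by
    intro nn; simp [hA]
  have hrep : ∀ nn : Fin m, x nn = ∑ i, A nn i • g i := by
    intro nn
    have hsub : (∑ i, A nn i • g i) = ∑ i ∈ insert nn (Iio nn), A nn i • g i := by
      refine (Finset.sum_subset (Finset.subset_univ _) ?_).symm
      intro i _ hi
      simp only [Finset.mem_insert, Finset.mem_Iio, not_or, not_lt] at hi
      rw [hA0 nn i (fun hle => hi.1 (le_antisymm hle hi.2)), zero_smul]
    rw [hsub, Finset.sum_insert (by simp), hAd, one_smul]
    conv_lhs => rw [gramSchmidt_def'' 𝕜 x nn]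
    congr 1
    refine Finset.sum_congr rfl fun i hi => ?_
    rw [Finset.mem_Iio] at hi
    simp only [hA, Matrix.of_apply, if_neg hi.ne, if_pos hi]
    rfl
  have horth : ∀ k l : Fin m, (inner 𝕜 (g k) (g l) : 𝕜) = if k = l then ((‖g k‖ : 𝕜)) ^ 2 else 0 := by
    intro k l
    by_cases h : k = l
    · subst h; simp [inner_self_eq_norm_sq_to_K]
    · rw [if_neg h]; exact gramSchmidt_orthogonal 𝕜 x h
  have hmat : (Matrix.of fun i j => (inner 𝕜 (x i) (x j) : 𝕜))
      = A.map (starRingEnd 𝕜) * Matrix.diagonal (fun k => ((‖g k‖ : 𝕜)) ^ 2) * A.transpose := by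
    ext i j
    rw [Matrix.mul_assoc, Matrix.mul_apply]
    simp only [Matrix.of_apply, Matrix.map_apply, Matrix.diagonal_mul, Matrix.transpose_apply]
    conv_lhs => rw [hrep i, hrep j]
    rw [sum_inner]
    refine Finset.sum_congr rfl fun k _ => ?_
    rw [inner_smul_left, inner_sum]
    simp_rw [inner_smul_right, horth, mul_ite, mul_zero, Finset.sum_ite_eq, Finset.mem_univ, if_pos]
    ring
  have hdetA : A.det = 1 := by
    rw [Matrix.det_of_lowerTriangular A (fun i j hij => hA0 i j (not_le.mpr hij))]
    simp [hAd]
  rw [gramDet, hmat, Matrix.det_mul, Matrix.det_mul, Matrix.det_transpose, hdetA,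
    Matrix.det_diagonal]
  have hmap : (A.map (starRingEnd 𝕜)).det = 1 := by
    have h2 : A.map (starRingEnd 𝕜) = A.conjTranspose.transpose := by
      ext i j; simp [Matrix.conjTranspose_apply]
    rw [h2, Matrix.det_transpose, Matrix.det_conjTranspose, hdetA]; simp
  rw [hmap, one_mul, mul_one]

theorem wedgeNorm_eq_prod (x : Fin m → E) :
    wedgeNorm 𝕜 x = ∏ i, ‖gramSchmidt 𝕜 x i‖ := by
  rw [wedgeNorm, gramDet_eq_prod]
  have : (∏ i, ((‖gramSchmidt 𝕜 x i‖ : 𝕜)) ^ 2) = ((∏ i, ‖gramSchmidt 𝕜 x i‖ ^ 2 : ℝ) : 𝕜) := by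
    rw [RCLike.ofReal_prod]
    exact Finset.prod_congr rfl fun i _ => by push_cast; ring
  rw [this, RCLike.ofReal_re, Finset.prod_pow,
    Real.sqrt_sq (Finset.prod_nonneg fun i _ => norm_nonneg _)]

theorem pdist_nonneg (x y : E) : 0 ≤ pdist 𝕜 x y :=
  div_nonneg (Real.sqrt_nonneg _) (mul_nonneg (norm_nonneg _) (norm_nonneg _))

/-- The pdist to a "projection-like" point. -/
theorem pdist_eq_of_perp {x P g : E} (hx : x = P + g) (hPg : (inner 𝕜 P g : 𝕜) = 0)
    (hP : P ≠ 0) :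
    pdist 𝕜 x P = ‖g‖ / ‖x‖ := by
  have hgP : (inner 𝕜 g P : 𝕜) = 0 := by rw [← inner_conj_symm, hPg, map_zero]
  have hxP : (inner 𝕜 x P : 𝕜) = (‖P‖ : 𝕜)^2 := by
    rw [hx, inner_add_left, hgP, add_zero, inner_self_eq_norm_sq_to_K]
  have hPx : (inner 𝕜 P x : 𝕜) = (‖P‖ : 𝕜)^2 := by
    rw [hx, inner_add_right, hPg, add_zero, inner_self_eq_norm_sq_to_K]
  have hpyth : ‖x‖^2 = ‖P‖^2 + ‖g‖^2 := by
    calc ‖x‖ ^ 2 = ‖P + g‖ ^ 2 := by rw [hx]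
      _ = ‖P‖ ^ 2 + 2 * RCLike.re (inner 𝕜 P g : 𝕜) + ‖g‖ ^ 2 := norm_add_sq (𝕜 := 𝕜) P g
      _ = ‖P‖ ^ 2 + ‖g‖ ^ 2 := by rw [hPg]; simp
  have hgram : gramDet 𝕜 ![x, P] ![x, P] = ((‖P‖^2 * ‖g‖^2 : ℝ) : 𝕜) := by
    rw [gramDet, Matrix.det_fin_two]
    simp only [Matrix.of_apply, Matrix.cons_val', Matrix.cons_val_zero, Matrix.cons_val_one,
      Matrix.head_cons, Matrix.empty_val', Matrix.cons_val_fin_one, Matrix.head_fin_const]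
    rw [hxP, hPx, inner_self_eq_norm_sq_to_K, inner_self_eq_norm_sq_to_K]
    have : ((‖x‖:𝕜))^2 * ((‖P‖:𝕜))^2 - ((‖P‖:𝕜))^2 * ((‖P‖:𝕜))^2
        = ((‖x‖^2 * ‖P‖^2 - ‖P‖^2*‖P‖^2 : ℝ) : 𝕜) := by push_cast; ring
    rw [this]
    congr 1
    rw [hpyth]; ring
  have hwn : wedgeNorm 𝕜 ![x, P] = ‖P‖ * ‖g‖ := by
    rw [wedgeNorm, hgram, RCLike.ofReal_re,
      show ‖P‖^2*‖g‖^2 = (‖P‖*‖g‖)^2 by ring,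
      Real.sqrt_sq (by positivity)]
  rw [pdist, hwn, mul_comm ‖x‖ ‖P‖,
    mul_div_mul_left _ _ (norm_ne_zero_iff.mpr hP)]

/-- The Gram-Schmidt vector is orthogonal to the earlier span. -/
theorem gs_mem_orthogonal (x : Fin m → E) (j : Fin m) :
    gramSchmidt 𝕜 x j ∈ (earlierSpan (𝕜 := 𝕜) x j)ᗮ := by
  rw [earlierSpan, Submodule.mem_orthogonal]
  intro u hu
  refine Submodule.span_induction (fun v hv => ?_) (by simp) (fun a b _ _ ha hb => ?_)
    (fun c a _ ha => ?_) hu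
  · obtain ⟨i, hij, rfl⟩ := hv
    have := gramSchmidt_inv_triangular 𝕜 x hij
    rw [← inner_conj_symm, this, map_zero]
  · rw [inner_add_left, ha, hb, add_zero]
  · rw [inner_smul_left, ha, mul_zero]

/-- `x j - gramSchmidt x j` lies in the earlier span. -/
theorem gs_sub_mem (x : Fin m → E) (j : Fin m) :
    x j - gramSchmidt 𝕜 x j ∈ earlierSpan (𝕜 := 𝕜) x j := by
  have h := gramSchmidt_def'' 𝕜 x j
  have : x j - gramSchmidt 𝕜 x j = ∑ i ∈ Iio j,
      ((inner 𝕜 (gramSchmidt 𝕜 x i) (x j) : 𝕜) / (‖gramSchmidt 𝕜 x i‖ : 𝕜) ^ 2) •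
        gramSchmidt 𝕜 x i := by
    conv_lhs => rw [h]
    abel
  rw [this]
  refine Submodule.sum_mem _ fun i hi => Submodule.smul_mem _ _ ?_
  rw [Finset.mem_Iio] at hi
  have hmem := gramSchmidt_mem_span 𝕜 x (le_refl i)
  refine Submodule.span_mono ?_ hmem
  rintro v ⟨k, hk, rfl⟩
  exact ⟨k, lt_of_le_of_lt (Set.mem_Iic.mp hk) hi, rfl⟩

variable [FiniteDimensional 𝕜 E]

/-- Gram-Schmidt equals subtraction of the orthogonal projection on the earlier span. -/
theorem gs_eq_sub_proj (x : Fin m → E) (j : Fin m) :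
    gramSchmidt 𝕜 x j
      = x j - (Submodule.orthogonalProjectionOnto (earlierSpan (𝕜 := 𝕜) x j) (x j) : E) := by
  set V := earlierSpan (𝕜 := 𝕜) x j with hV
  set P : E := (Submodule.orthogonalProjectionOnto V (x j) : E) with hP
  have h1 : gramSchmidt 𝕜 x j - (x j - P) ∈ V := by
    have : gramSchmidt 𝕜 x j - (x j - P) = P - (x j - gramSchmidt 𝕜 x j) := by abel
    rw [this]
    exact Submodule.sub_mem _ (Submodule.coe_mem _) (gs_sub_mem x j)
  have h2 : gramSchmidt 𝕜 x j - (x j - P) ∈ Vᗮ :=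
    Submodule.sub_mem _ (gs_mem_orthogonal x j) (Submodule.sub_starProjection_mem_orthogonal _)
  have h3 : gramSchmidt 𝕜 x j - (x j - P) = 0 := by
    have := Submodule.inf_orthogonal_eq_bot V
    have hm : gramSchmidt 𝕜 x j - (x j - P) ∈ V ⊓ Vᗮ := ⟨h1, h2⟩
    rw [this] at hm
    simpa using hm
  linear_combination (norm := module) h3

theorem gs_pythagoras (x : Fin m → E) (j : Fin m) :
    ‖x j‖ ^ 2 = ‖(Submodule.orthogonalProjectionOnto (earlierSpan (𝕜 := 𝕜) x j) (x j) : E)‖ ^ 2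
      + ‖gramSchmidt 𝕜 x j‖ ^ 2 := by
  set V := earlierSpan (𝕜 := 𝕜) x j with hV
  set P : E := (Submodule.orthogonalProjectionOnto V (x j) : E) with hP
  set g : E := gramSchmidt 𝕜 x j with hgdef
  have hxPg : x j = P + g := by
    have h := gs_eq_sub_proj (𝕜 := 𝕜) x j
    rw [hgdef, h, hP, hV]
    abel
  have hinner : (inner 𝕜 (P : E) g : 𝕜) = 0 :=
    Submodule.inner_right_of_mem_orthogonal (Submodule.coe_mem _) (gs_mem_orthogonal x j)
  calc ‖x j‖ ^ 2 = ‖P + g‖ ^ 2 := by rw [hxPg]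
    _ = ‖P‖ ^ 2 + 2 * RCLike.re (inner 𝕜 (P:E) g : 𝕜) + ‖g‖ ^ 2 := norm_add_sq (𝕜 := 𝕜) P g
    _ = ‖P‖ ^ 2 + ‖g‖ ^ 2 := by rw [hinner]; simp

theorem gs_norm_le (x : Fin m → E) (j : Fin m) : ‖gramSchmidt 𝕜 x j‖ ≤ ‖x j‖ := by
  have h := gs_pythagoras (𝕜 := 𝕜) x j
  nlinarith [norm_nonneg (gramSchmidt 𝕜 x j), norm_nonneg (x j),
    sq_nonneg ‖(Submodule.orthogonalProjectionOnto (earlierSpan (𝕜 := 𝕜) x j) (x j) : E)‖]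

theorem gs_norm_ge (x : Fin m → E) (hx : AlmostOrthogonal 𝕜 x) (j : Fin m) :
    aoc (j : ℕ) * ‖x j‖ ≤ ‖gramSchmidt 𝕜 x j‖ := by
  by_cases hj : (j : ℕ) = 0
  · -- earlier span is trivial, so `gramSchmidt x j = x j`
    have hbot : earlierSpan (𝕜 := 𝕜) x j = ⊥ := by
      rw [earlierSpan]
      have : {v : E | ∃ i : Fin m, i < j ∧ v = x i} = ∅ := by
        ext v
        simp only [Set.mem_setOf_eq, Set.mem_empty_iff_false, iff_false, not_exists]
        rintro i ⟨hij, -⟩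
        have : (i : ℕ) < (j : ℕ) := hij
        omega
      rw [this, Submodule.span_empty]
    have hsub := gs_sub_mem (𝕜 := 𝕜) x j
    rw [hbot, Submodule.mem_bot, sub_eq_zero] at hsub
    rw [← hsub, aoc, if_pos hj, one_mul]
  · have hj' : 0 < (j : ℕ) := Nat.pos_of_ne_zero hj
    have hle := hx.2 j hj'
    have hxj : x j ≠ 0 := hx.1.ne_zero j
    have hxjn : (0:ℝ) < ‖x j‖ := norm_pos_iff.mpr hxj
    set V := earlierSpan (𝕜 := 𝕜) x j with hV
    set P : E := (Submodule.orthogonalProjectionOnto V (x j) : E) with hP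
    set g : E := gramSchmidt 𝕜 x j with hgdef
    have hxPg : x j = P + g := by
      have h := gs_eq_sub_proj (𝕜 := 𝕜) x j
      rw [hgdef, h, hP, hV]
      abel
    have haoc : aoc (j : ℕ) = 1 - (1/2:ℝ)^(j:ℕ) := by rw [aoc, if_neg hj]
    by_cases hP0 : P = 0
    · have : x j = g := by rw [hxPg, hP0, zero_add]
      rw [← this]
      exact mul_le_of_le_one_left (norm_nonneg _) (aoc_le_one _)
    · have hinner : (inner 𝕜 (P : E) g : 𝕜) = 0 :=
        Submodule.inner_right_of_mem_orthogonal (Submodule.coe_mem _) (gs_mem_orthogonal x j)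
      have hpd : pdist 𝕜 (x j) P = ‖g‖ / ‖x j‖ := pdist_eq_of_perp hxPg hinner hP0
      have hbdd : BddBelow {d : ℝ | ∃ y ∈ V, y ≠ 0 ∧ d = pdist 𝕜 (x j) y} := by
        refine ⟨0, fun d hd => ?_⟩
        obtain ⟨y, -, -, rfl⟩ := hd
        exact pdist_nonneg _ _
      have hmem : pdist 𝕜 (x j) P ∈ {d : ℝ | ∃ y ∈ V, y ≠ 0 ∧ d = pdist 𝕜 (x j) y} :=
        ⟨P, Submodule.coe_mem _, hP0, rfl⟩
      have hpv : pdistPV 𝕜 (x j) V ≤ pdist 𝕜 (x j) P := csInf_le hbdd hmem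
      have hchain : 1 - (1/2:ℝ)^(j:ℕ) ≤ ‖g‖ / ‖x j‖ := by
        calc 1 - (1/2:ℝ)^(j:ℕ) ≤ pdistPV 𝕜 (x j) V := hle
          _ ≤ pdist 𝕜 (x j) P := hpv
          _ = ‖g‖ / ‖x j‖ := hpd
      rw [haoc]
      exact (le_div_iff₀ hxjn).mp hchain

end Gram

/-- an almost orthogonal sequence in `Lⁿ` (`L = ℝ` or `ℂ`)
satisfies `e⁻² ‖x₁‖⋯‖xₘ‖ ≤ ‖x₁ ∧ ⋯ ∧ xₘ‖ ≤ ‖x₁‖⋯‖xₘ‖`. -/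
theorem stmt10 {𝕜 : Type*} [RCLike 𝕜] {n m : ℕ}
    (x : Fin m → EuclideanSpace 𝕜 (Fin n)) (hx : AlmostOrthogonal 𝕜 x) :
    Real.exp (-2) * ∏ i, ‖x i‖ ≤ wedgeNorm 𝕜 x ∧
      wedgeNorm 𝕜 x ≤ ∏ i, ‖x i‖ := by
  have hw : wedgeNorm 𝕜 x = ∏ i, ‖gramSchmidt 𝕜 x i‖ := wedgeNorm_eq_prod x
  constructor
  · calc Real.exp (-2) * ∏ i, ‖x i‖
        ≤ (∏ i : Fin m, aoc (i : ℕ)) * ∏ i, ‖x i‖ :=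
          mul_le_mul_of_nonneg_right (exp_neg_two_le_prod_aoc m)
            (Finset.prod_nonneg fun i _ => norm_nonneg _)
      _ = ∏ i : Fin m, (aoc (i : ℕ) * ‖x i‖) := by rw [← Finset.prod_mul_distrib]
      _ ≤ ∏ i, ‖gramSchmidt 𝕜 x i‖ :=
          Finset.prod_le_prod (fun i _ => mul_nonneg (aoc_nonneg _) (norm_nonneg _))
            (fun i _ => gs_norm_ge x hx i)
      _ = wedgeNorm 𝕜 x := hw.symm
  · rw [hw]
    exact Finset.prod_le_prod (fun i _ => norm_nonneg _) (fun i _ => gs_norm_le x i)
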